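/- Let S be a left CP-semiring, M a left S-semimodule, and p : S →ₗ[S] M a surjective S-linear map from the regular left semimodule (so M is a quotient of S by a semimodule congruence). Then there exist an element e ∈ S with e * e = e and an S-linear map ψ : M →ₗ[S] S such that p ∘ ψ = id_M, ψ(p(1)) = e, p(e) = p(1), and the range of ψ equals Submodule.span S {e} (i.e., the cyclic left ideal Se); in particular M is isomorphic as an S-semimodule to Se. -/
import Mathlib


universe u

/-- A left CP-semiring: every cyclic left `S`-semimodule is projective. -/
def IsLeftCPSemiring (S : Type u) [Semiring S] : Prop :=
  ∀ (M : Type u) [AddCommMonoid M] [Module S M],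
    (∃ m : M, Submodule.span S {m} = ⊤) → Module.Projective S M

/-- over a left CP-semiring, every quotient `M` of the regular left
semimodule splits off via an idempotent `e`: there are `e` with `e * e = e` and a
section `ψ` of `p` with `ψ (p 1) = e`, `p e = p 1`, and `range ψ = Se`. -/
theorem quotient_of_regular_splits
    {S : Type u} [Semiring S] (hS : IsLeftCPSemiring S)
    (M : Type u) [AddCommMonoid M] [Module S M]
    (p : S →ₗ[S] M) (hp : Function.Surjective p) :
    ∃ (e : S) (ψ : M →ₗ[S] S), e * e = e ∧
      p ∘ₗ ψ = LinearMap.id ∧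
      ψ (p 1) = e ∧
      p e = p 1 ∧
      LinearMap.range ψ = Submodule.span S {e} := by
  have hsmul : ∀ s : S, p s = s • p 1 := fun s => by
    rw [← map_smul, smul_eq_mul, mul_one]
  have hcyc : Submodule.span S {p 1} = ⊤ := by
    rw [eq_top_iff]
    intro m _
    obtain ⟨s, rfl⟩ := hp m
    rw [hsmul s]
    exact Submodule.smul_mem _ s (Submodule.mem_span_singleton_self _)
  have hproj := hS M ⟨p 1, hcyc⟩
  obtain ⟨ψ, hψ⟩ := Module.projective_lifting_property p LinearMap.id hp
  have hψ' : ∀ m : M, p (ψ m) = m := fun m => LinearMap.congr_fun hψ m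
  have hpe : p (ψ (p 1)) = p 1 := hψ' (p 1)
  refine ⟨ψ (p 1), ψ, ?_, hψ, rfl, hpe, ?_⟩
  · calc ψ (p 1) * ψ (p 1) = ψ (ψ (p 1) • p 1) := (map_smul ψ _ _).symm
      _ = ψ (p 1) := by rw [← hsmul, hpe]
  · ext s
    simp only [LinearMap.mem_range, Submodule.mem_span_singleton]
    constructor
    · rintro ⟨m, rfl⟩
      obtain ⟨t, rfl⟩ := hp m
      exact ⟨t, by rw [← map_smul, ← hsmul]⟩
    · rintro ⟨t, rfl⟩
      exact ⟨t • p 1, by rw [map_smul]⟩
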